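/- Let (A,Π,α,β) be a BiHom-left-symmetric algebra over a field K of characteristic zero (write x·y = Π(x,y)), and let π₁, π₂ be bilinear maps commuting with α and β that generate linear deformations Π_t¹ = Π + tπ₁ and Π_t² = Π + tπ₂. Suppose the two deformations are equivalent, i.e. there is a linear map N: A → A such that for every t ∈ K the map T_t = Id + tN is a homomorphism of BiHom-left-symmetric algebras from (A, Π_t², α, β) to (A, Π_t¹, α, β). Then π₂(x,y) − π₁(x,y) = N(x)·y + x·N(y) − N(x·y) for all x,y ∈ A; in particular π₂ − π₁ is the coboundary ∂¹(N) in the cohomology with coefficients in the adjoint representation, so π₁ and π₂ lie in the same cohomology class of H²(A;A). -/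

import Mathlib

def IsLin (K : Type*) [Field K] {A B : Type*} [AddCommGroup A] [Module K A]
    [AddCommGroup B] [Module K B] (f : A → B) : Prop :=
  ∀ (c : K) (x y : A), f (c • x + y) = c • f x + f y

def IsBilin (K : Type*) [Field K] {A B C : Type*} [AddCommGroup A] [Module K A]
    [AddCommGroup B] [Module K B] [AddCommGroup C] [Module K C] (f : A → B → C) : Prop :=
  (∀ (c : K) (x x' : A) (y : B), f (c • x + x') y = c • f x y + f x' y) ∧
  (∀ (c : K) (x : A) (y y' : B), f x (c • y + y') = c • f x y + f x y')

/-- A BiHom-Lie algebra structure: a bilinear bracket together with two commuting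
multiplicative linear maps `α, β` satisfying BiHom-skew-symmetry and the BiHom-Jacobi
identity. -/
def IsBiHomLie (K : Type*) [Field K] {g : Type*} [AddCommGroup g] [Module K g]
    (br : g → g → g) (α β : g → g) : Prop :=
  IsBilin K br ∧ IsLin K α ∧ IsLin K β ∧
  (∀ x, α (β x) = β (α x)) ∧
  (∀ x y, α (br x y) = br (α x) (α y)) ∧
  (∀ x y, β (br x y) = br (β x) (β y)) ∧
  (∀ x y, br (β x) (α y) = - br (β y) (α x)) ∧
  (∀ x y z, br (β (β x)) (br (β y) (α z)) + br (β (β y)) (br (β z) (α x))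
      + br (β (β z)) (br (β x) (α y)) = 0)

/-- A BiHom-left-symmetric algebra structure: a bilinear product together with two
commuting multiplicative linear maps `α, β` satisfying the BiHom-left-symmetric identity. -/
def IsBiHomLS (K : Type*) [Field K] {A : Type*} [AddCommGroup A] [Module K A]
    (mul : A → A → A) (α β : A → A) : Prop :=
  IsBilin K mul ∧ IsLin K α ∧ IsLin K β ∧
  (∀ x, α (β x) = β (α x)) ∧
  (∀ x y, α (mul x y) = mul (α x) (α y)) ∧
  (∀ x y, β (mul x y) = mul (β x) (β y)) ∧
  (∀ x y z,
    mul (mul (β x) (α y)) (α (β z)) - mul (α (β x)) (mul (α y) z)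
      = mul (mul (β y) (α x)) (α (β z)) - mul (α (β y)) (mul (α x) z))

/-- A representation of a BiHom-Lie algebra `(g, br, α, β)` on `V` with respect to
commuting linear maps `φ, ψ`. -/
def IsBiHomLieRep (K : Type*) [Field K] {g V : Type*} [AddCommGroup g] [Module K g]
    [AddCommGroup V] [Module K V] (br : g → g → g) (α β : g → g)
    (ρ : g → V →ₗ[K] V) (φ ψ : V →ₗ[K] V) : Prop :=
  IsLin K ρ ∧ (∀ v, φ (ψ v) = ψ (φ v)) ∧
  (∀ x, ρ (α x) ∘ₗ φ = φ ∘ₗ ρ x) ∧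
  (∀ x, ρ (β x) ∘ₗ ψ = ψ ∘ₗ ρ x) ∧
  (∀ x y, ρ (br (β x) y) ∘ₗ ψ = ρ (α (β x)) ∘ₗ ρ y - ρ (β y) ∘ₗ ρ (α x))

/-- A representation `(V, L, R, φ, ψ)` of a BiHom-left-symmetric algebra `(A, mul, α, β)`. -/
def IsBiHomLSRep (K : Type*) [Field K] {A V : Type*} [AddCommGroup A] [Module K A]
    [AddCommGroup V] [Module K V] (mul : A → A → A) (α β : A → A)
    (L R : A → V →ₗ[K] V) (φ ψ : V →ₗ[K] V) : Prop :=
  IsLin K L ∧ IsLin K R ∧ (∀ v, φ (ψ v) = ψ (φ v)) ∧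
  (∀ x, φ ∘ₗ L x = L (α x) ∘ₗ φ) ∧
  (∀ x, ψ ∘ₗ L x = L (β x) ∘ₗ ψ) ∧
  (∀ x, φ ∘ₗ R x = R (α x) ∘ₗ φ) ∧
  (∀ x, ψ ∘ₗ R x = R (β x) ∘ₗ ψ) ∧
  (∀ x y, L (mul (β x) (α y)) ∘ₗ ψ - L (α (β x)) ∘ₗ L (α y)
      = L (mul (β y) (α x)) ∘ₗ ψ - L (α (β y)) ∘ₗ L (α x)) ∧
  (∀ x y, R (β x) ∘ₗ L (β y) ∘ₗ φ - L (α (β y)) ∘ₗ R x ∘ₗ φ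
      = R (β x) ∘ₗ R (α y) ∘ₗ ψ - R (mul (α y) x) ∘ₗ φ ∘ₗ ψ)

section Aux

variable {K : Type*} [Field K] {A B C : Type*} [AddCommGroup A] [Module K A]
    [AddCommGroup B] [Module K B] [AddCommGroup C] [Module K C]

lemma bilin_zero_left {f : A → B → C} (hf : IsBilin K f) (y : B) : f 0 y = 0 := by
  have h := hf.1 1 0 0 y
  simp only [one_smul, add_zero] at h
  exact (left_eq_add.mp h)

lemma bilin_add_left {f : A → B → C} (hf : IsBilin K f) (x x' : A) (y : B) :
    f (x + x') y = f x y + f x' y := by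
  have h := hf.1 1 x x' y
  simpa using h

lemma bilin_smul_left {f : A → B → C} (hf : IsBilin K f) (c : K) (x : A) (y : B) :
    f (c • x) y = c • f x y := by
  have h := hf.1 c x 0 y
  simpa [bilin_zero_left hf] using h

lemma bilin_zero_right {f : A → B → C} (hf : IsBilin K f) (x : A) : f x 0 = 0 := by
  have h := hf.2 1 x 0 0
  simp only [one_smul, add_zero] at h
  exact (left_eq_add.mp h)

lemma bilin_add_right {f : A → B → C} (hf : IsBilin K f) (x : A) (y y' : B) :
    f x (y + y') = f x y + f x y' := by
  have h := hf.2 1 x y y'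
  simpa using h

lemma bilin_smul_right {f : A → B → C} (hf : IsBilin K f) (c : K) (x : A) (y : B) :
    f x (c • y) = c • f x y := by
  have h := hf.2 c x y 0
  simpa [bilin_zero_right hf] using h

lemma lin_add {f : A → B} (hf : IsLin K f) (x y : A) : f (x + y) = f x + f y := by
  have h := hf 1 x y
  simpa using h

lemma lin_zero {f : A → B} (hf : IsLin K f) : f 0 = 0 := by
  have h := hf 1 0 0
  simp only [one_smul, add_zero] at h
  exact (left_eq_add.mp h)

lemma lin_smul {f : A → B} (hf : IsLin K f) (c : K) (x : A) : f (c • x) = c • f x := by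
  have h := hf c x 0
  simpa [lin_zero hf] using h

end Aux

/-- if two linear deformations `Π + tπ₁` and `Π + tπ₂` are equivalent via
`T_t = Id + tN`, then `π₂ − π₁ = ∂¹(N)` is the coboundary of `N` in the adjoint
representation, so `π₁` and `π₂` define the same class in `H²(A; A)`. -/
theorem stmt14 (K : Type*) [Field K] [CharZero K]
    {A : Type*} [AddCommGroup A] [Module K A]
    (mul : A → A → A) (α β : A → A)
    (halg : IsBiHomLS K mul α β)
    (π₁ π₂ : A → A → A) (hπ₁bil : IsBilin K π₁) (hπ₂bil : IsBilin K π₂)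
    (hπ₁α : ∀ x y, π₁ (α x) (α y) = α (π₁ x y))
    (hπ₁β : ∀ x y, π₁ (β x) (β y) = β (π₁ x y))
    (hπ₂α : ∀ x y, π₂ (α x) (α y) = α (π₂ x y))
    (hπ₂β : ∀ x y, π₂ (β x) (β y) = β (π₂ x y))
    (hdef₁ : ∀ t : K, IsBiHomLS K (fun x y => mul x y + t • π₁ x y) α β)
    (hdef₂ : ∀ t : K, IsBiHomLS K (fun x y => mul x y + t • π₂ x y) α β)
    (N : A → A) (hN : IsLin K N)
    (hhom : ∀ t : K,
      (∀ x y,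
        (mul x y + t • π₂ x y) + t • N (mul x y + t • π₂ x y)
          = mul (x + t • N x) (y + t • N y) + t • π₁ (x + t • N x) (y + t • N y)) ∧
      (∀ x, α x + t • N (α x) = α (x + t • N x)) ∧
      (∀ x, β x + t • N (β x) = β (x + t • N x))) :
    ∀ x y, π₂ x y - π₁ x y = mul (N x) y + mul x (N y) - N (mul x y) := by
  intro x y
  have hmul : IsBilin K mul := halg.1
  have h1 := (hhom 1).1 x y
  have hm1 := (hhom (-1)).1 x y
  have h2 := (hhom 2).1 x y
  simp only [bilin_add_left hmul, bilin_add_right hmul, bilin_smul_left hmul,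
    bilin_smul_right hmul, bilin_add_left hπ₁bil, bilin_add_right hπ₁bil,
    bilin_smul_left hπ₁bil, bilin_smul_right hπ₁bil, lin_add hN, lin_smul hN]
    at h1 hm1 h2
  linear_combination (norm := module) h1 - (3⁻¹ : K) • hm1 - (6⁻¹ : K) • h2
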